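/- For a finite abelian group A = ∏_{j=1}^{k} ℤ/n_jℤ, (1/|A|) * Σ_{l=1}^{|A|} ∏_{j=1}^{k} gcd(l, n_j) = Σ_{a ∈ A} 1/|a|, where |a| denotes the order of the element a in A. -/

import Mathlib

open Finset

lemma card_smul_zero (l n : ℕ) (hn : 0 < n) [NeZero n] :
    Fintype.card {x : ZMod n // l • x = 0} = Nat.gcd l n := by
  set g := Nat.gcd l n with hg
  have hgpos : 0 < g := Nat.gcd_pos_of_pos_right l hn
  set m := n / g with hm
  have hgn : g ∣ n := Nat.gcd_dvd_right l n
  have hmg : m * g = n := Nat.div_mul_cancel hgn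
  have hmpos : 0 < m := Nat.div_pos (Nat.le_of_dvd hn hgn) hgpos
  have key : ∀ x : ZMod n, l • x = 0 ↔ m ∣ x.val := by
    intro x
    have hx : l • x = ((l * x.val : ℕ) : ZMod n) := by
      push_cast
      rw [ZMod.natCast_val, ZMod.cast_id, nsmul_eq_mul]
    rw [hx, ZMod.natCast_eq_zero_iff]
    have hl : l = l / g * g := (Nat.div_mul_cancel (Nat.gcd_dvd_left l n)).symm
    constructor
    · intro h
      have h2 : m * g ∣ (l / g * x.val) * g := by
        rw [hmg]; convert h using 1; rw [mul_right_comm, ← hl]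
      have h3 : m ∣ l / g * x.val := (mul_dvd_mul_iff_right hgpos.ne').mp h2
      have hcop : Nat.Coprime (l / g) m := Nat.coprime_div_gcd_div_gcd hgpos
      exact Nat.Coprime.dvd_of_dvd_mul_left hcop.symm h3
    · rintro ⟨c, hc⟩
      refine ⟨l / g * c, ?_⟩
      rw [hc, ← hmg]
      conv_lhs => rw [hl]
      ring
  rw [Fintype.card_subtype]
  rw [show g = (Finset.range g).card from (Finset.card_range g).symm]
  refine Finset.card_nbij' (fun x => x.val / m) (fun t => ((m * t : ℕ) : ZMod n)) ?_ ?_ ?_ ?_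
  · intro x hx
    simp only [coe_filter, Set.mem_setOf_eq, mem_filter, mem_univ, true_and] at hx
    rw [key] at hx
    rw [mem_coe, Finset.mem_range, Nat.div_lt_iff_lt_mul hmpos]
    calc x.val < n := ZMod.val_lt x
    _ = g * m := by rw [← hmg]; ring
  · intro t ht
    rw [mem_coe, Finset.mem_range] at ht
    simp only [coe_filter, Set.mem_setOf_eq, mem_filter, mem_univ, true_and]
    rw [key, ZMod.val_natCast_of_lt (by calc m * t < m * g := (Nat.mul_lt_mul_left hmpos).mpr ht
      _ = n := hmg)]
    exact ⟨t, rfl⟩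
  · intro x hx
    simp only [coe_filter, Set.mem_setOf_eq, mem_filter, mem_univ, true_and] at hx
    rw [key] at hx
    show ((m * (x.val / m) : ℕ) : ZMod n) = x
    rw [Nat.mul_div_cancel' hx, ZMod.natCast_val, ZMod.cast_id]
  · intro t ht
    rw [mem_coe, Finset.mem_range] at ht
    show (((m * t : ℕ) : ZMod n)).val / m = t
    rw [ZMod.val_natCast_of_lt (by calc m * t < m * g := (Nat.mul_lt_mul_left hmpos).mpr ht
      _ = n := hmg)]
    exact Nat.mul_div_cancel_left t hmpos

lemma card_pi_orderdvd (k : ℕ) (n : Fin k → ℕ) (hn : ∀ j, 0 < n j) [∀ j, NeZero (n j)] (l : ℕ) :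
    (Finset.univ.filter fun a : ∀ j, ZMod (n j) => addOrderOf a ∣ l).card
      = ∏ j, Nat.gcd l (n j) := by
  classical
  have h1 : ∀ a : ∀ j, ZMod (n j), (addOrderOf a ∣ l) ↔ ∀ j, l • a j = 0 := by
    intro a
    rw [addOrderOf_dvd_iff_nsmul_eq_zero, funext_iff]
    simp [Pi.smul_apply]
  rw [← Fintype.card_subtype]
  have e : {a : ∀ j, ZMod (n j) // addOrderOf a ∣ l} ≃ ∀ j, {x : ZMod (n j) // l • x = 0} := by
    refine Equiv.trans ?_ (Equiv.subtypePiEquivPi (p := fun j (x : ZMod (n j)) => l • x = 0))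
    exact Equiv.subtypeEquivRight h1
  rw [Fintype.card_congr e, Fintype.card_pi]
  exact Finset.prod_congr rfl fun j _ => card_smul_zero l (n j) (hn j)

theorem stmt_4 (k : ℕ) (n : Fin k → ℕ) (hn : ∀ j, 0 < n j) [∀ j, NeZero (n j)] :
    (1 / ((∏ j, n j : ℕ) : ℚ)) *
        ∑ l ∈ Finset.Icc 1 (∏ j, n j), ∏ j, (Nat.gcd l (n j) : ℚ) =
      ∑ a : (∀ j, ZMod (n j)), 1 / (addOrderOf a : ℚ) := by
  classical
  set N := ∏ j, n j with hN
  have hNpos : 0 < N := Finset.prod_pos fun j _ => hn j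
  have hcard : Fintype.card (∀ j, ZMod (n j)) = N := by
    rw [Fintype.card_pi]; exact Finset.prod_congr rfl fun j _ => ZMod.card (n j)
  -- key sum identity over ℕ
  have hswap : ∑ l ∈ Finset.Icc 1 N, ∏ j, Nat.gcd l (n j)
      = ∑ a : ∀ j, ZMod (n j), N / addOrderOf a := by
    calc ∑ l ∈ Finset.Icc 1 N, ∏ j, Nat.gcd l (n j)
        = ∑ l ∈ Finset.Icc 1 N,
            (Finset.univ.filter fun a : ∀ j, ZMod (n j) => addOrderOf a ∣ l).card := by
          exact Finset.sum_congr rfl fun l _ => (card_pi_orderdvd k n hn l).symm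
      _ = ∑ l ∈ Finset.Icc 1 N, ∑ a : ∀ j, ZMod (n j), if addOrderOf a ∣ l then 1 else 0 := by
          exact Finset.sum_congr rfl fun l _ => Finset.card_filter _ _
      _ = ∑ a : ∀ j, ZMod (n j), ∑ l ∈ Finset.Icc 1 N, if addOrderOf a ∣ l then 1 else 0 :=
          Finset.sum_comm
      _ = ∑ a : ∀ j, ZMod (n j), N / addOrderOf a := by
          refine Finset.sum_congr rfl fun a _ => ?_
          rw [← Finset.card_filter]
          have : Finset.Icc 1 N = Finset.Ioc 0 N := rfl
          rw [this]
          exact Nat.Ioc_filter_dvd_card_eq_div N (addOrderOf a)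
  have hcast : ∀ a : ∀ j, ZMod (n j),
      ((N / addOrderOf a : ℕ) : ℚ) = (N : ℚ) * (1 / (addOrderOf a : ℚ)) := by
    intro a
    have hdvd : addOrderOf a ∣ N := hcard ▸ addOrderOf_dvd_card
    have hpos : 0 < addOrderOf a := addOrderOf_pos a
    rw [Nat.cast_div hdvd (by exact_mod_cast hpos.ne'), div_eq_mul_one_div]
  calc (1 / (N : ℚ)) * ∑ l ∈ Finset.Icc 1 N, ∏ j, (Nat.gcd l (n j) : ℚ)
      = (1 / (N : ℚ)) * ((∑ l ∈ Finset.Icc 1 N, ∏ j, Nat.gcd l (n j) : ℕ) : ℚ) := by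
        push_cast; ring
    _ = (1 / (N : ℚ)) * ((∑ a : ∀ j, ZMod (n j), N / addOrderOf a : ℕ) : ℚ) := by rw [hswap]
    _ = ∑ a : ∀ j, ZMod (n j), 1 / (addOrderOf a : ℚ) := by
        push_cast [hcast]
        rw [← Finset.mul_sum, ← mul_assoc, one_div_mul_cancel (by exact_mod_cast hNpos.ne'), one_mul]
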